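/- Let P and Q be probability measures on ℝ^n admitting densities p and q with respect to Lebesgue measure, with Q absolutely continuous with respect to P, and write E(x) = q(x)/p(x) for the likelihood ratio. Suppose T(x) = c·q(x)/p(x) for some constant c > 0 and T(x) < ∞ for all x. Let X ~ W where W ∈ {P, Q}, and let Y^{(1)}, Y^{(2)}, ... be i.i.d. samples from P, independent of X. Then the Besag-Clifford e-value Ê_M(X) = (M+1)·T(X) / (T(X) + Σ_{m=1}^M T(Y^{(m)})) converges almost surely to E(X) as M → ∞. -/

import Mathlib

open MeasureTheory ProbabilityTheory Filter Finset

/-- **Theorem 1, exact sampling.**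
Let `P, Q` be probability measures on `ℝⁿ` with Lebesgue densities `p, q`, `Q ≪ P`,
and `E(x) = q(x)/p(x)`. Suppose `T(x) = c·q(x)/p(x)` for some `c > 0`. If `X ~ W`
with `W ∈ {P, Q}` and `Y⁽¹⁾, Y⁽²⁾, …` are i.i.d. from `P`, independent of `X`, then
`Ê_M(X) = (M+1)·T(X)/(T(X) + Σ_{m=1}^M T(Y⁽ᵐ⁾))` converges almost surely to `E(X)`. -/
theorem besag_clifford_iid_log_optimal
    {n : ℕ} {Ω : Type*} [MeasurableSpace Ω]
    (μ : Measure Ω) [IsProbabilityMeasure μ]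
    (P Q W : Measure (Fin n → ℝ))
    [IsProbabilityMeasure P] [IsProbabilityMeasure Q]
    (p q : (Fin n → ℝ) → ℝ) (hp : Measurable p) (hq : Measurable q)
    (hp0 : ∀ x, 0 ≤ p x) (hq0 : ∀ x, 0 ≤ q x)
    (hP : P = volume.withDensity (fun x => ENNReal.ofReal (p x)))
    (hQ : Q = volume.withDensity (fun x => ENNReal.ofReal (q x)))
    (hQP : Q ≪ P)
    (T : (Fin n → ℝ) → ℝ) (c : ℝ) (hc : 0 < c)
    (hTdef : ∀ x, T x = c * (q x / p x))
    (X : Ω → (Fin n → ℝ)) (Y : ℕ → Ω → (Fin n → ℝ))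
    (hX : Measurable X) (hY : ∀ m, Measurable (Y m))
    (hW : W = P ∨ W = Q)
    (hXlaw : Measure.map X μ = W)
    (hYlaw : ∀ m, Measure.map (Y m) μ = P)
    -- `X, Y⁽¹⁾, Y⁽²⁾, …` are jointly independent (so the `Y`'s are i.i.d. from `P`,
    -- independent of `X`)
    (hindep : iIndepFun
      (fun o : Option ℕ => Option.elim o X Y) μ) :
    ∀ᵐ ω ∂μ, Tendsto
      (fun M : ℕ =>
        ((M : ℝ) + 1) * T (X ω) / (T (X ω) + ∑ m ∈ Finset.range M, T (Y m ω)))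
      atTop (nhds (q (X ω) / p (X ω))) := by
  have hTfun : T = fun x => c * (q x / p x) := funext hTdef
  have hT : Measurable T := by
    rw [hTfun]; exact (measurable_const.mul (hq.div hp))
  have hT0 : ∀ x, 0 ≤ T x := fun x => by
    rw [hTdef]; exact mul_nonneg hc.le (div_nonneg (hq0 x) (hp0 x))
  have hsm : MeasurableSet {x | p x = 0} := hp (measurableSet_singleton 0)
  -- a.e. (λ), p x = 0 → q x = 0
  have hp0set : P {x | p x = 0} = 0 := by
    rw [hP, withDensity_apply _ hsm]
    refine (lintegral_eq_zero_iff (hp.ennreal_ofReal)).mpr ?_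
    filter_upwards [ae_restrict_mem hsm] with x hx
    simp [Set.mem_setOf_eq.mp hx]
  have hq0set : Q {x | p x = 0} = 0 := hQP hp0set
  have hqae : ∀ᵐ x ∂(volume : Measure (Fin n → ℝ)), p x = 0 → q x = 0 := by
    have h0 : ∫⁻ x in {x | p x = 0}, ENNReal.ofReal (q x) ∂volume = 0 := by
      rw [← withDensity_apply _ hsm, ← hQ]; exact hq0set
    have h1 : ∀ᵐ x ∂((volume : Measure (Fin n → ℝ)).restrict {x | p x = 0}),
        ENNReal.ofReal (q x) = (0 : ENNReal) :=
      (lintegral_eq_zero_iff (hq.ennreal_ofReal)).mp h0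
    rw [ae_restrict_iff' hsm] at h1
    filter_upwards [h1] with x hx hpx
    have h2 := hx hpx
    simp only [ENNReal.ofReal_eq_zero] at h2
    exact le_antisymm h2 (hq0 x)
  -- the key integral computation: ∫⁻ ofReal (T x) ∂P = ofReal c
  have hlint : ∫⁻ x, ENNReal.ofReal (T x) ∂P = ENNReal.ofReal c := by
    rw [hP, lintegral_withDensity_eq_lintegral_mul _ (hp.ennreal_ofReal)
      (hT.ennreal_ofReal)]
    have heq : ∀ᵐ x ∂(volume : Measure (Fin n → ℝ)),
        ((fun x => ENNReal.ofReal (p x)) * fun x => ENNReal.ofReal (T x)) x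
          = ENNReal.ofReal (c * q x) := by
      filter_upwards [hqae] with x hx
      simp only [Pi.mul_apply]
      rcases eq_or_ne (p x) 0 with h0 | h0
      · simp [h0, hx h0]
      · rw [← ENNReal.ofReal_mul (hp0 x), hTdef]
        congr 1
        field_simp
    rw [lintegral_congr_ae heq]
    have hor : ∀ x, ENNReal.ofReal (c * q x) = ENNReal.ofReal c * ENNReal.ofReal (q x) :=
      fun x => ENNReal.ofReal_mul hc.le
    simp_rw [hor]
    rw [lintegral_const_mul _ (hq.ennreal_ofReal)]
    have hQ1 : ∫⁻ x, ENNReal.ofReal (q x) ∂(volume : Measure (Fin n → ℝ)) = 1 := by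
      have h3 : Q Set.univ = 1 := measure_univ
      rwa [hQ, withDensity_apply _ MeasurableSet.univ, Measure.restrict_univ] at h3
    rw [hQ1, mul_one]
  have hTint : Integrable T P := by
    refine ⟨hT.aestronglyMeasurable, ?_⟩
    rw [HasFiniteIntegral]
    have hn : ∀ x, ‖T x‖ₑ = ENNReal.ofReal (T x) := fun x => by
      rw [← ofReal_norm, Real.norm_of_nonneg (hT0 x)]
    simp_rw [hn, hlint]
    exact ENNReal.ofReal_lt_top
  have hTavg : ∫ x, T x ∂P = c := by
    rw [integral_eq_lintegral_of_nonneg_ae (Filter.Eventually.of_forall hT0)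
      hT.aestronglyMeasurable, hlint, ENNReal.toReal_ofReal hc.le]
  -- set up SLLN for Z m := T ∘ Y m
  set Z : ℕ → Ω → ℝ := fun m ω => T (Y m ω) with hZ
  have hZint : Integrable (Z 0) μ :=
    (integrable_map_measure hT.aestronglyMeasurable (hY 0).aemeasurable).mp
      (by rw [hYlaw 0]; exact hTint)
  have hZindep : Pairwise (Function.onFun (IndepFun · · μ) Z) := by
    intro i j hij
    have h1 : IndepFun (Y i) (Y j) μ := by
      have := hindep.indepFun (i := some i) (j := some j) (by simpa using hij)
      simpa using this
    exact h1.comp hT hT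
  have hZident : ∀ i, IdentDistrib (Z i) (Z 0) μ μ := by
    intro i
    refine ⟨(hT.comp (hY i)).aemeasurable, (hT.comp (hY 0)).aemeasurable, ?_⟩
    have h1 : Measure.map (Z i) μ = Measure.map T P := by
      rw [hZ, ← hYlaw i, Measure.map_map hT (hY i)]; rfl
    have h2 : Measure.map (Z 0) μ = Measure.map T P := by
      rw [hZ, ← hYlaw 0, Measure.map_map hT (hY 0)]; rfl
    rw [h1, h2]
  have hZavg : μ[Z 0] = c := by
    rw [hZ]
    have h1 : ∫ ω, T (Y 0 ω) ∂μ = ∫ x, T x ∂(Measure.map (Y 0) μ) :=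
      (integral_map (hY 0).aemeasurable hT.aestronglyMeasurable).symm
    rw [h1, hYlaw 0, hTavg]
  have hslln := strong_law_ae_real Z hZint hZindep hZident
  rw [hZavg] at hslln
  -- conclude
  filter_upwards [hslln] with ω hω
  set t := T (X ω) with ht
  set S : ℕ → ℝ := fun M => ∑ m ∈ Finset.range M, T (Y m ω) with hS
  have hωS : Tendsto (fun M : ℕ => S M / M) atTop (nhds c) := hω
  have htarget : q (X ω) / p (X ω) = t / c := by
    rw [ht, hTdef, mul_div_cancel_left₀ _ hc.ne']
  rw [htarget]
  show Tendsto (fun M : ℕ => ((M : ℝ) + 1) * t / (t + S M)) atTop (nhds (t / c))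
  have key : (fun M : ℕ => ((M : ℝ) + 1) * t / (t + S M))
      =ᶠ[atTop] (fun M : ℕ => t * ((((M : ℝ) + 1) / M) / ((t + S M) / M))) := by
    filter_upwards [eventually_ge_atTop 1] with M hM
    have hM0 : (M : ℝ) ≠ 0 := Nat.cast_ne_zero.mpr (by omega)
    rcases eq_or_ne (t + S M) 0 with h0 | h0
    · simp [h0]
    · field_simp
  have h1 : Tendsto (fun M : ℕ => ((M : ℝ) + 1) / M) atTop (nhds 1) := by
    have h1' : Tendsto (fun M : ℕ => 1 + 1 / (M : ℝ)) atTop (nhds (1 + 0)) :=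
      tendsto_const_nhds.add tendsto_one_div_atTop_nhds_zero_nat
    rw [add_zero] at h1'
    refine h1'.congr' ?_
    filter_upwards [eventually_ge_atTop 1] with M hM
    have hM0 : (M : ℝ) ≠ 0 := Nat.cast_ne_zero.mpr (by omega)
    field_simp
  have h2 : Tendsto (fun M : ℕ => (t + S M) / M) atTop (nhds c) := by
    have ht0 : Tendsto (fun M : ℕ => t * (1 / (M : ℝ))) atTop (nhds (t * 0)) :=
      tendsto_const_nhds.mul tendsto_one_div_atTop_nhds_zero_nat
    have h2' := ht0.add hωS
    rw [mul_zero, zero_add] at h2'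
    refine h2'.congr fun M => ?_
    rw [add_div]
    ring
  have h3 : Tendsto (fun M : ℕ => t * ((((M : ℝ) + 1) / M) / ((t + S M) / M)))
      atTop (nhds (t * (1 / c))) := tendsto_const_nhds.mul (h1.div h2 hc.ne')
  rw [mul_one_div] at h3
  exact Tendsto.congr' key.symm h3
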